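/- Let n be a positive integer with n ≡ 2 or 3 (mod 4) and let k be an integer with 0 ≤ k ≤ n−1. Then P_{n,k} = Q_{n,n−k−1} and Q_{n,k} = P_{n,n−k−1}. -/

import Mathlib

open Finset

/-- Number of ascents of a permutation of `[n]` (positions `i` with `a_i < a_{i+1}`). -/
def ascents {n : ℕ} (A : Equiv.Perm (Fin n)) : ℕ :=
  (univ.filter fun i : Fin n => ∃ h : i.val + 1 < n, A i < A ⟨i.val + 1, h⟩).card

/-- Number of inversions of a permutation. -/
def invNum {n : ℕ} (A : Equiv.Perm (Fin n)) : ℕ :=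
  (univ.filter fun p : Fin n × Fin n => p.1 < p.2 ∧ A p.2 < A p.1).card

/-- A permutation is parity-alternate if consecutive entries have different parity. -/
def IsPAP {n : ℕ} (A : Equiv.Perm (Fin n)) : Prop :=
  ∀ i : Fin n, ∀ h : i.val + 1 < n, (A i).val % 2 ≠ (A ⟨i.val + 1, h⟩).val % 2

instance {n : ℕ} (A : Equiv.Perm (Fin n)) : Decidable (IsPAP A) := by
  unfold IsPAP; infer_instance

/-- `P_{n,k}`: number of even parity-alternate permutations of `[n]` with `k` ascents. -/
def papEven (n k : ℕ) : ℕ :=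
  (univ.filter fun A : Equiv.Perm (Fin n) => IsPAP A ∧ ascents A = k ∧ Even (invNum A)).card

/-- `Q_{n,k}`: number of odd parity-alternate permutations of `[n]` with `k` ascents. -/
def papOdd (n k : ℕ) : ℕ :=
  (univ.filter fun A : Equiv.Perm (Fin n) => IsPAP A ∧ ascents A = k ∧ Odd (invNum A)).card

/-- `S_{n,k}`: number of parity-alternate permutations of `[n]` with `k` ascents. -/
def papTotal (n k : ℕ) : ℕ :=
  (univ.filter fun A : Equiv.Perm (Fin n) => IsPAP A ∧ ascents A = k).card

/-- `R_{n,k} = P_{n,k} - Q_{n,k}`. -/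
def papSigned (n k : ℕ) : ℤ := (papEven n k : ℤ) - papOdd n k

/-- `B_{n,k}`: number of even permutations of `[n]` with `k` ascents. -/
def eulerEven (n k : ℕ) : ℕ :=
  (univ.filter fun A : Equiv.Perm (Fin n) => ascents A = k ∧ Even (invNum A)).card

/-- `C_{n,k}`: number of odd permutations of `[n]` with `k` ascents. -/
def eulerOdd (n k : ℕ) : ℕ :=
  (univ.filter fun A : Equiv.Perm (Fin n) => ascents A = k ∧ Odd (invNum A)).card

/-- `D_{n,k} = B_{n,k} - C_{n,k}`: the signed Eulerian number. -/
def eulerSigned (n k : ℕ) : ℤ := (eulerEven n k : ℤ) - eulerOdd n k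

namespace PAPaux
open Equiv
variable {n : ℕ}

def descents'' {n : ℕ} (A : Equiv.Perm (Fin n)) : ℕ :=
  (univ.filter fun i : Fin n => ∃ h : i.val + 1 < n, A ⟨i.val + 1, h⟩ < A i).card

def rc (A : Perm (Fin n)) : Perm (Fin n) := Fin.revPerm.trans A

@[simp] lemma rc_apply (A : Perm (Fin n)) (i : Fin n) : rc A i = A i.rev := rfl

@[simp] lemma rc_rc (A : Perm (Fin n)) : rc (rc A) = A := by
  ext i; simp [rc]

lemma ascents_rc (hn : 0 < n) (A : Perm (Fin n)) : ascents (rc A) = descents'' A := by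
  classical
  refine Finset.card_nbij'
    (fun i => ⟨n - 2 - i.val, by omega⟩)
    (fun i => ⟨n - 2 - i.val, by omega⟩)
    ?_ ?_ ?_ ?_
  · intro a ha
    simp only [Finset.mem_coe, mem_filter, mem_univ, true_and] at ha ⊢
    obtain ⟨h, hlt⟩ := ha
    have hj : (n - 2 - a.val) + 1 < n := by omega
    refine ⟨hj, ?_⟩
    have h1 : a.rev = (⟨(n - 2 - a.val) + 1, hj⟩ : Fin n) := by
      ext; simp [Fin.val_rev]; omega
    have h2 : (⟨a.val + 1, h⟩ : Fin n).rev = (⟨n - 2 - a.val, by omega⟩ : Fin n) := by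
      ext; simp [Fin.val_rev]; omega
    simp only [rc_apply, h1, h2] at hlt
    exact hlt
  · intro a ha
    simp only [Finset.mem_coe, mem_filter, mem_univ, true_and] at ha ⊢
    obtain ⟨h, hlt⟩ := ha
    have hj : (n - 2 - a.val) + 1 < n := by omega
    refine ⟨hj, ?_⟩
    have h1 : (⟨n - 2 - a.val, by omega⟩ : Fin n).rev = (⟨a.val + 1, h⟩ : Fin n) := by
      ext; simp [Fin.val_rev]; omega
    have h2 : (⟨(n - 2 - a.val) + 1, hj⟩ : Fin n).rev = a := by
      ext; simp [Fin.val_rev]; omega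
    simp only [rc_apply, h1, h2]
    exact hlt
  · intro a ha
    simp only [Finset.mem_coe, mem_filter, mem_univ, true_and] at ha
    obtain ⟨h, -⟩ := ha
    ext; simp; omega
  · intro a ha
    simp only [Finset.mem_coe, mem_filter, mem_univ, true_and] at ha
    obtain ⟨h, -⟩ := ha
    ext; simp; omega

lemma ascents_add_descents'' (hn : 0 < n) (A : Perm (Fin n)) :
    ascents A + descents'' A = n - 1 := by
  classical
  have hdisj : Disjoint
      (univ.filter fun i : Fin n => ∃ h : i.val + 1 < n, A i < A ⟨i.val + 1, h⟩)
      (univ.filter fun i : Fin n => ∃ h : i.val + 1 < n, A ⟨i.val + 1, h⟩ < A i) := by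
    rw [Finset.disjoint_filter]
    rintro i - ⟨h, hlt⟩ ⟨h', hlt'⟩
    exact absurd (hlt.trans hlt') (lt_irrefl _)
  have hunion :
      (univ.filter fun i : Fin n => ∃ h : i.val + 1 < n, A i < A ⟨i.val + 1, h⟩) ∪
      (univ.filter fun i : Fin n => ∃ h : i.val + 1 < n, A ⟨i.val + 1, h⟩ < A i) =
      univ.filter fun i : Fin n => i.val + 1 < n := by
    ext i
    simp only [mem_union, mem_filter, mem_univ, true_and]
    constructor
    · rintro (⟨h, -⟩ | ⟨h, -⟩) <;> exact h
    · intro h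
      have hne : A i ≠ A ⟨i.val + 1, h⟩ := by
        intro he
        have := A.injective he
        have : i.val = i.val + 1 := congrArg Fin.val this
        omega
      rcases lt_or_gt_of_ne hne with hh | hh
      · exact Or.inl ⟨h, hh⟩
      · exact Or.inr ⟨h, hh⟩
  have hcard : (univ.filter fun i : Fin n => i.val + 1 < n).card = n - 1 := by
    have hs := Finset.card_filter_add_card_filter_not
      (s := (univ : Finset (Fin n))) (p := fun i : Fin n => i.val + 1 < n)
    have h1 : (univ.filter fun i : Fin n => ¬ (i.val + 1 < n)) =
        {(⟨n - 1, by omega⟩ : Fin n)} := by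
      ext i; simp [Fin.ext_iff]; omega
    rw [h1] at hs
    simp only [card_singleton, card_univ, Fintype.card_fin] at hs
    omega
  rw [ascents, descents'', ← Finset.card_union_of_disjoint hdisj, hunion, hcard]

lemma ascents_rc_eq (hn : 0 < n) (A : Perm (Fin n)) :
    ascents (rc A) = n - 1 - ascents A := by
  have h1 := ascents_add_descents'' hn A
  rw [ascents_rc hn]
  omega

lemma invNum_rc (A : Perm (Fin n)) :
    invNum (rc A) =
      (univ.filter fun p : Fin n × Fin n => p.1 < p.2 ∧ A p.1 < A p.2).card := by
  unfold invNum
  refine Finset.card_nbij' (fun p => (p.2.rev, p.1.rev)) (fun p => (p.2.rev, p.1.rev))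
    ?_ ?_ ?_ ?_
  · intro p hp
    simp only [Finset.mem_coe, mem_filter, mem_univ, true_and] at hp ⊢
    simp only [rc_apply] at hp ⊢
    exact ⟨Fin.rev_lt_rev.mpr hp.1, hp.2⟩
  · intro p hp
    simp only [Finset.mem_coe, mem_filter, mem_univ, true_and] at hp ⊢
    simp only [rc_apply] at hp ⊢
    refine ⟨Fin.rev_lt_rev.mpr hp.1, ?_⟩
    simpa [Fin.rev_rev] using hp.2
  · intro p _; simp [Fin.rev_rev]
  · intro p _; simp [Fin.rev_rev]

lemma invNum_add (A : Perm (Fin n)) :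
    invNum (rc A) + invNum A =
      (univ.filter fun p : Fin n × Fin n => p.1 < p.2).card := by
  classical
  rw [invNum_rc, invNum]
  have hdisj : Disjoint
      (univ.filter fun p : Fin n × Fin n => p.1 < p.2 ∧ A p.1 < A p.2)
      (univ.filter fun p : Fin n × Fin n => p.1 < p.2 ∧ A p.2 < A p.1) := by
    rw [Finset.disjoint_filter]
    rintro p - ⟨-, h1⟩ ⟨-, h2⟩
    exact absurd (h1.trans h2) (lt_irrefl _)
  rw [← Finset.card_union_of_disjoint hdisj]
  congr 1
  ext p
  simp only [mem_union, mem_filter, mem_univ, true_and]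
  constructor
  · rintro (⟨h, -⟩ | ⟨h, -⟩) <;> exact h
  · intro h
    have hne : A p.1 ≠ A p.2 := fun he => absurd (A.injective he) (ne_of_lt h)
    rcases lt_or_gt_of_ne hne with hh | hh
    · exact Or.inl ⟨h, hh⟩
    · exact Or.inr ⟨h, hh⟩

lemma two_mul_card_ltpairs :
    2 * (univ.filter fun p : Fin n × Fin n => p.1 < p.2).card = n * n - n := by
  classical
  have h1 : (univ.filter fun p : Fin n × Fin n => p.1 < p.2).card =
      (univ.filter fun p : Fin n × Fin n => p.2 < p.1).card := by
    refine Finset.card_nbij' Prod.swap Prod.swap ?_ ?_ ?_ ?_ <;> intro p hp <;>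
      simp_all
  have hdisj : Disjoint
      (univ.filter fun p : Fin n × Fin n => p.1 < p.2)
      (univ.filter fun p : Fin n × Fin n => p.2 < p.1) := by
    rw [Finset.disjoint_filter]
    rintro p - h1 h2
    exact absurd (h1.trans h2) (lt_irrefl _)
  have hunion :
      (univ.filter fun p : Fin n × Fin n => p.1 < p.2) ∪
      (univ.filter fun p : Fin n × Fin n => p.2 < p.1) =
      (univ : Finset (Fin n)).offDiag := by
    ext p
    simp only [mem_union, mem_filter, mem_univ, true_and, Finset.mem_offDiag, ne_eq,
      Fin.lt_def, Fin.ext_iff]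
    omega
  have hcard := Finset.card_union_of_disjoint hdisj
  rw [hunion, Finset.offDiag_card] at hcard
  simp only [card_univ, Fintype.card_fin] at hcard
  omega

lemma odd_card_ltpairs (h4 : n % 4 = 2 ∨ n % 4 = 3) :
    Odd (univ.filter fun p : Fin n × Fin n => p.1 < p.2).card := by
  have h := two_mul_card_ltpairs (n := n)
  have hsq : n * n % 4 = (n % 4) * (n % 4) % 4 := Nat.mul_mod n n 4
  have hle : n ≤ n * n := Nat.le_mul_of_pos_left n (by omega)
  rw [Nat.odd_iff]
  rcases h4 with h4 | h4 <;> rw [h4] at hsq <;> omega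



lemma isPAP_rc {A : Perm (Fin n)} (hA : IsPAP A) : IsPAP (rc A) := by
  intro i h
  have hj : (n - 2 - i.val) + 1 < n := by omega
  have h1 : i.rev = (⟨(n - 2 - i.val) + 1, hj⟩ : Fin n) := by
    ext; simp [Fin.val_rev]; omega
  have h2 : (⟨i.val + 1, h⟩ : Fin n).rev = (⟨n - 2 - i.val, by omega⟩ : Fin n) := by
    ext; simp [Fin.val_rev]; omega
  simp only [rc_apply, h1, h2]
  exact (hA ⟨n - 2 - i.val, by omega⟩ hj).symm

end PAPaux

theorem papEven_papOdd_swap_of_mod_four (n k : ℕ) (hn0 : 0 < n)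
    (h4 : n % 4 = 2 ∨ n % 4 = 3) (hk : k ≤ n - 1) :
    papEven n k = papOdd n (n - k - 1) ∧ papOdd n k = papEven n (n - k - 1) := by
  classical
  have hodd := PAPaux.odd_card_ltpairs (n := n) h4
  rw [Nat.odd_iff] at hodd
  constructor
  · refine Finset.card_nbij' PAPaux.rc PAPaux.rc ?_ ?_ ?_ ?_
    · intro A hA
      simp only [Finset.mem_coe, mem_filter, mem_univ, true_and] at hA ⊢
      obtain ⟨hp, hasc, hev⟩ := hA
      have h1 : ascents (PAPaux.rc A) = n - 1 - ascents A := PAPaux.ascents_rc_eq hn0 A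
      have h2 := PAPaux.invNum_add A
      rw [Nat.even_iff] at hev
      exact ⟨PAPaux.isPAP_rc hp, by omega, by rw [Nat.odd_iff]; omega⟩
    · intro A hA
      simp only [Finset.mem_coe, mem_filter, mem_univ, true_and] at hA ⊢
      obtain ⟨hp, hasc, hev⟩ := hA
      have h1 : ascents (PAPaux.rc A) = n - 1 - ascents A := PAPaux.ascents_rc_eq hn0 A
      have h2 := PAPaux.invNum_add A
      rw [Nat.odd_iff] at hev
      exact ⟨PAPaux.isPAP_rc hp, by omega, by rw [Nat.even_iff]; omega⟩
    · intro A _; exact PAPaux.rc_rc A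
    · intro A _; exact PAPaux.rc_rc A
  · refine Finset.card_nbij' PAPaux.rc PAPaux.rc ?_ ?_ ?_ ?_
    · intro A hA
      simp only [Finset.mem_coe, mem_filter, mem_univ, true_and] at hA ⊢
      obtain ⟨hp, hasc, hev⟩ := hA
      have h1 : ascents (PAPaux.rc A) = n - 1 - ascents A := PAPaux.ascents_rc_eq hn0 A
      have h2 := PAPaux.invNum_add A
      rw [Nat.odd_iff] at hev
      exact ⟨PAPaux.isPAP_rc hp, by omega, by rw [Nat.even_iff]; omega⟩
    · intro A hA
      simp only [Finset.mem_coe, mem_filter, mem_univ, true_and] at hA ⊢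
      obtain ⟨hp, hasc, hev⟩ := hA
      have h1 : ascents (PAPaux.rc A) = n - 1 - ascents A := PAPaux.ascents_rc_eq hn0 A
      have h2 := PAPaux.invNum_add A
      rw [Nat.even_iff] at hev
      exact ⟨PAPaux.isPAP_rc hp, by omega, by rw [Nat.odd_iff]; omega⟩
    · intro A _; exact PAPaux.rc_rc A
    · intro A _; exact PAPaux.rc_rc A
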